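/- Let Γ ≤ S_n be a permutation group and V, W two orthogonal invariant subspaces with R^n = fix(Γ) ⊕ V ⊕ W. Suppose z ∈ Z^n with Σ_i z_i = k is a core point for stab_Γ(π_V(z)) and has globally minimal projection onto V, i.e. ‖π_V(z)‖ ≤ ‖π_V(z')‖ for all z' ∈ Z^n with Σ_i z'_i = k. Let w ∈ W ∩ Z^n satisfy stab_Γ(π_V(z)) ≤ stab_Γ(w). Then for every m ∈ Z, the point z + m·w is a core point for Γ, i.e. conv(Γ(z + m·w)) contains no integral points other than its vertices. -/

import Mathlib

noncomputable section

open scoped RealInnerProductSpace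

def permAct {n : ℕ} (γ : Equiv.Perm (Fin n)) (x : EuclideanSpace ℝ (Fin n)) :
    EuclideanSpace ℝ (Fin n) := WithLp.toLp 2 (fun i => x (γ⁻¹ i))

def allOnes (n : ℕ) : EuclideanSpace ℝ (Fin n) := WithLp.toLp 2 (fun _ => 1)

def intVec {n : ℕ} (z : Fin n → ℤ) : EuclideanSpace ℝ (Fin n) := WithLp.toLp 2 (fun i => (z i : ℝ))

def orbitSet {n : ℕ} (Γ : Subgroup (Equiv.Perm (Fin n))) (x : EuclideanSpace ℝ (Fin n)) :
    Set (EuclideanSpace ℝ (Fin n)) := {y | ∃ γ ∈ Γ, y = permAct γ x}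

def IsCorePoint {n : ℕ} (Γ : Subgroup (Equiv.Perm (Fin n))) (z : Fin n → ℤ) : Prop :=
  ∀ y : Fin n → ℤ, intVec y ∈ convexHull ℝ (orbitSet Γ (intVec z)) →
    intVec y ∈ orbitSet Γ (intVec z)

def stabSub {n : ℕ} (Γ : Subgroup (Equiv.Perm (Fin n))) (v : EuclideanSpace ℝ (Fin n)) :
    Subgroup (Equiv.Perm (Fin n)) where
  carrier := {γ | γ ∈ Γ ∧ permAct γ v = v}
  one_mem' := ⟨Γ.one_mem, rfl⟩
  mul_mem' := fun {a b} ha hb => ⟨Γ.mul_mem ha.1 hb.1, by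
    have h : permAct (a * b) v = permAct a (permAct b v) := rfl
    rw [h, hb.2, ha.2]⟩
  inv_mem' := fun {a} ha => ⟨Γ.inv_mem ha.1, by
    conv_lhs => rw [← ha.2]
    have h : permAct a⁻¹ (permAct a v) = permAct (a⁻¹ * a) v := rfl
    rw [h, inv_mul_cancel]; rfl⟩


namespace Aux
variable {n : ℕ}

lemma permAct_one (x : EuclideanSpace ℝ (Fin n)) : permAct 1 x = x := rfl

lemma permAct_mul (γ δ : Equiv.Perm (Fin n)) (x : EuclideanSpace ℝ (Fin n)) :
    permAct (γ * δ) x = permAct γ (permAct δ x) := rfl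

lemma permAct_add (γ : Equiv.Perm (Fin n)) (x y : EuclideanSpace ℝ (Fin n)) :
    permAct γ (x + y) = permAct γ x + permAct γ y := rfl

lemma permAct_smul (γ : Equiv.Perm (Fin n)) (c : ℝ) (x : EuclideanSpace ℝ (Fin n)) :
    permAct γ (c • x) = c • permAct γ x := rfl

lemma permAct_sub (γ : Equiv.Perm (Fin n)) (x y : EuclideanSpace ℝ (Fin n)) :
    permAct γ (x - y) = permAct γ x - permAct γ y := rfl

lemma permAct_inner (γ : Equiv.Perm (Fin n)) (x y : EuclideanSpace ℝ (Fin n)) :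
    ⟪permAct γ x, permAct γ y⟫ = ⟪x, y⟫ := by
  simp only [PiLp.inner_apply, RCLike.inner_apply, conj_trivial, permAct]
  exact Equiv.sum_comp γ⁻¹ (fun j => y j * x j)

lemma permAct_inv_cancel (γ : Equiv.Perm (Fin n)) (x : EuclideanSpace ℝ (Fin n)) :
    permAct γ (permAct γ⁻¹ x) = x := by
  rw [← permAct_mul, mul_inv_cancel, permAct_one]

lemma permAct_norm (γ : Equiv.Perm (Fin n)) (x : EuclideanSpace ℝ (Fin n)) :
    ‖permAct γ x‖ = ‖x‖ := by
  have h := permAct_inner γ x x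
  rw [real_inner_self_eq_norm_sq, real_inner_self_eq_norm_sq] at h
  have := sq_abs (‖permAct γ x‖); nlinarith [norm_nonneg (permAct γ x), norm_nonneg x]

lemma proj_comm (Γ : Subgroup (Equiv.Perm (Fin n))) (V : Submodule ℝ (EuclideanSpace ℝ (Fin n)))
    (hVinv : ∀ γ ∈ Γ, ∀ v ∈ V, permAct γ v ∈ V) {γ : Equiv.Perm (Fin n)} (hγ : γ ∈ Γ)
    (x : EuclideanSpace ℝ (Fin n)) :
    (V.orthogonalProjectionOnto (permAct γ x) : EuclideanSpace ℝ (Fin n)) =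
      permAct γ (V.orthogonalProjectionOnto x : EuclideanSpace ℝ (Fin n)) := by
  apply Submodule.eq_starProjection_of_mem_of_inner_eq_zero
  · exact hVinv γ hγ _ (V.orthogonalProjectionOnto x).2
  · intro v hv
    rw [← permAct_sub, ← permAct_inv_cancel γ v]
    rw [permAct_inner]
    have hv' : permAct γ⁻¹ v ∈ V := hVinv γ⁻¹ (Γ.inv_mem hγ) v hv
    have hmem := Submodule.sub_starProjection_mem_orthogonal (K := V) x
    exact (Submodule.mem_orthogonal' V _).1 hmem _ hv'

lemma proj_zero_of_orth (V : Submodule ℝ (EuclideanSpace ℝ (Fin n)))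
    {x : EuclideanSpace ℝ (Fin n)} (hx : ∀ v ∈ V, ⟪v, x⟫ = 0) :
    (V.orthogonalProjectionOnto x : EuclideanSpace ℝ (Fin n)) = 0 := by
  apply Submodule.eq_starProjection_of_mem_of_inner_eq_zero V.zero_mem
  intro v hv
  rw [sub_zero, real_inner_comm]
  exact hx v hv

lemma inner_allOnes (x : EuclideanSpace ℝ (Fin n)) : ⟪allOnes n, x⟫ = ∑ i, x i := by
  simp [PiLp.inner_apply, RCLike.inner_apply, allOnes]

lemma permAct_allOnes (γ : Equiv.Perm (Fin n)) : permAct γ (allOnes n) = allOnes n := rfl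

lemma inner_allOnes_permAct (γ : Equiv.Perm (Fin n)) (x : EuclideanSpace ℝ (Fin n)) :
    ⟪allOnes n, permAct γ x⟫ = ⟪allOnes n, x⟫ := by
  conv_lhs => rw [← permAct_allOnes γ, permAct_inner]

lemma mem_stabSub {Γ : Subgroup (Equiv.Perm (Fin n))} {v : EuclideanSpace ℝ (Fin n)}
    {γ : Equiv.Perm (Fin n)} : γ ∈ stabSub Γ v ↔ γ ∈ Γ ∧ permAct γ v = v := Iff.rfl

lemma permAct_zero (γ : Equiv.Perm (Fin n)) : permAct γ (0 : EuclideanSpace ℝ (Fin n)) = 0 := rfl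

lemma permAct_sum {ι : Type*} (γ : Equiv.Perm (Fin n)) (s : Finset ι)
    (f : ι → EuclideanSpace ℝ (Fin n)) :
    permAct γ (∑ i ∈ s, f i) = ∑ i ∈ s, permAct γ (f i) := by
  classical
  induction s using Finset.induction with
  | empty => simp [permAct_zero]
  | insert a s h ih => rw [Finset.sum_insert h, Finset.sum_insert h, permAct_add, ih]

lemma proj_add (V : Submodule ℝ (EuclideanSpace ℝ (Fin n))) (a b : EuclideanSpace ℝ (Fin n)) :
    (V.orthogonalProjectionOnto (a + b) : EuclideanSpace ℝ (Fin n)) =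
      (V.orthogonalProjectionOnto a : EuclideanSpace ℝ (Fin n)) + V.orthogonalProjectionOnto b := by
  rw [map_add]; rfl

lemma proj_smul (V : Submodule ℝ (EuclideanSpace ℝ (Fin n))) (c : ℝ) (a : EuclideanSpace ℝ (Fin n)) :
    (V.orthogonalProjectionOnto (c • a) : EuclideanSpace ℝ (Fin n)) =
      c • (V.orthogonalProjectionOnto a : EuclideanSpace ℝ (Fin n)) := by
  rw [map_smul]; rfl

lemma proj_sum (V : Submodule ℝ (EuclideanSpace ℝ (Fin n))) {ι : Type*} (s : Finset ι)
    (f : ι → EuclideanSpace ℝ (Fin n)) :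
    (V.orthogonalProjectionOnto (∑ i ∈ s, f i) : EuclideanSpace ℝ (Fin n)) =
      ∑ i ∈ s, (V.orthogonalProjectionOnto (f i) : EuclideanSpace ℝ (Fin n)) := by
  classical
  induction s using Finset.induction with
  | empty => simp
  | insert a s h ih => rw [Finset.sum_insert h, Finset.sum_insert h, proj_add, ih]

end Aux

open Aux
theorem stmt15 {n : ℕ} (Γ : Subgroup (Equiv.Perm (Fin n)))
    (F V W : Submodule ℝ (EuclideanSpace ℝ (Fin n)))
    (hF : ∀ x : EuclideanSpace ℝ (Fin n), x ∈ F ↔ ∀ γ ∈ Γ, permAct γ x = x)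
    (hVinv : ∀ γ ∈ Γ, ∀ v ∈ V, permAct γ v ∈ V)
    (hWinv : ∀ γ ∈ Γ, ∀ w ∈ W, permAct γ w ∈ W)
    (hVW : ∀ v ∈ V, ∀ w ∈ W, ⟪v, w⟫ = 0)
    (hFV : ∀ f ∈ F, ∀ v ∈ V, ⟪f, v⟫ = 0)
    (hFW : ∀ f ∈ F, ∀ w ∈ W, ⟪f, w⟫ = 0)
    (hdecomp : ∀ x : EuclideanSpace ℝ (Fin n), ∃ f ∈ F, ∃ v ∈ V, ∃ w ∈ W, x = f + v + w)
    (z : Fin n → ℤ) (k : ℤ) (hk : ∑ i, z i = k)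
    (hmin : ∀ z' : Fin n → ℤ, ∑ i, z' i = k →
      ‖(V.orthogonalProjectionOnto (intVec z) : EuclideanSpace ℝ (Fin n))‖ ≤
        ‖(V.orthogonalProjectionOnto (intVec z') : EuclideanSpace ℝ (Fin n))‖)
    (hcore : IsCorePoint
      (stabSub Γ (V.orthogonalProjectionOnto (intVec z) : EuclideanSpace ℝ (Fin n))) z)
    (w : Fin n → ℤ) (hw : intVec w ∈ W)
    (hstab : stabSub Γ (V.orthogonalProjectionOnto (intVec z) : EuclideanSpace ℝ (Fin n)) ≤
      stabSub Γ (intVec w))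
    (m : ℤ) :
    IsCorePoint Γ (fun i => z i + m * w i) := by
  classical
  intro y hy
  set Z' : EuclideanSpace ℝ (Fin n) := intVec (fun i => z i + m * w i) with hZ'def
  have hZ' : Z' = intVec z + (m : ℝ) • intVec w := by
    ext i
    simp only [hZ'def, intVec, PiLp.toLp_apply, PiLp.add_apply, PiLp.smul_apply, smul_eq_mul]
    push_cast; ring
  set Pz : EuclideanSpace ℝ (Fin n) := (V.orthogonalProjectionOnto (intVec z) :
    EuclideanSpace ℝ (Fin n)) with hPzdef
  -- projection of w is zero
  have hπw : (V.orthogonalProjectionOnto (intVec w) : EuclideanSpace ℝ (Fin n)) = 0 :=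
    proj_zero_of_orth V (fun v hv => hVW v hv _ hw)
  have hPZ' : (V.orthogonalProjectionOnto Z' : EuclideanSpace ℝ (Fin n)) = Pz := by
    rw [hZ', proj_add, proj_smul, hπw, smul_zero, add_zero]
  -- sum of w is 0 (real)
  have hsw : ⟪allOnes n, intVec w⟫ = 0 := by
    have h1 : allOnes n ∈ F := (hF _).2 (fun γ _ => rfl)
    exact hFW _ h1 _ hw
  have hsz : ⟪allOnes n, intVec z⟫ = (k : ℝ) := by
    rw [inner_allOnes]
    have : ∑ i, intVec z i = ((∑ i, z i : ℤ) : ℝ) := by push_cast [intVec]; rfl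
    rw [this, hk]
  have hsZ' : ⟪allOnes n, Z'⟫ = (k : ℝ) := by
    rw [hZ', inner_add_right, real_inner_smul_right, hsz, hsw, mul_zero, add_zero]
  -- convex combination
  rw [convexHull_eq] at hy
  obtain ⟨ι, t, lam, p, hlam0, hlam1, hpmem, hcm⟩ := hy
  have hpmem' : ∀ i ∈ t, ∃ γ ∈ Γ, p i = permAct γ Z' := hpmem
  choose! g hgΓ hgeq using hpmem'
  have hsum : intVec y = ∑ i ∈ t, lam i • p i := by
    rw [← hcm, Finset.centerMass_eq_of_sum_1 _ _ hlam1]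
  -- sum of y is k
  have hysum : ∑ i, y i = k := by
    have hry : ⟪allOnes n, intVec y⟫ = (k : ℝ) := by
      rw [hsum, inner_sum]
      have : ∀ i ∈ t, ⟪allOnes n, lam i • p i⟫ = lam i * (k : ℝ) := by
        intro i hi
        rw [real_inner_smul_right, hgeq i hi, inner_allOnes_permAct, hsZ']
      rw [Finset.sum_congr rfl this, ← Finset.sum_mul, hlam1, one_mul]
    have : ((∑ i, y i : ℤ) : ℝ) = (k : ℝ) := by
      rw [← hry, inner_allOnes]; push_cast [intVec]; rfl
    exact_mod_cast this
  -- projections of the p i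
  have hpv : ∀ i ∈ t, (V.orthogonalProjectionOnto (p i) : EuclideanSpace ℝ (Fin n)) =
      permAct (g i) Pz := by
    intro i hi
    rw [hgeq i hi, proj_comm Γ V hVinv (hgΓ i hi), hPZ']
  set r : ℝ := ‖Pz‖ with hrdef
  have hvnorm : ∀ i ∈ t, ‖(V.orthogonalProjectionOnto (p i) : EuclideanSpace ℝ (Fin n))‖ = r := by
    intro i hi; rw [hpv i hi, permAct_norm]
  set u : EuclideanSpace ℝ (Fin n) := (V.orthogonalProjectionOnto (intVec y) :
    EuclideanSpace ℝ (Fin n)) with hudef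
  have hPy : u = ∑ i ∈ t, lam i •
      (V.orthogonalProjectionOnto (p i) : EuclideanSpace ℝ (Fin n)) := by
    rw [hudef, hsum, proj_sum]
    exact Finset.sum_congr rfl (fun i _ => proj_smul V _ _)
  have hle : ‖u‖ ≤ r := by
    rw [hPy]
    calc ‖∑ i ∈ t, lam i • (V.orthogonalProjectionOnto (p i) : EuclideanSpace ℝ (Fin n))‖
        ≤ ∑ i ∈ t, ‖lam i • (V.orthogonalProjectionOnto (p i) : EuclideanSpace ℝ (Fin n))‖ :=
          norm_sum_le _ _
      _ = ∑ i ∈ t, lam i * r := by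
          refine Finset.sum_congr rfl (fun i hi => ?_)
          rw [norm_smul, hvnorm i hi, Real.norm_eq_abs, abs_of_nonneg (hlam0 i hi)]
      _ = r := by rw [← Finset.sum_mul, hlam1, one_mul]
  have hge : r ≤ ‖u‖ := hmin y hysum
  have hueq : ‖u‖ = r := le_antisymm hle hge
  -- equality case of triangle inequality
  have hkey : ∀ i ∈ t, lam i ≠ 0 →
      (V.orthogonalProjectionOnto (p i) : EuclideanSpace ℝ (Fin n)) = u := by
    have hsum2 : ∑ i ∈ t, lam i * ⟪u, (V.orthogonalProjectionOnto (p i) :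
        EuclideanSpace ℝ (Fin n))⟫ = r ^ 2 := by
      have h1 : ⟪u, u⟫ = r ^ 2 := by rw [real_inner_self_eq_norm_sq, hueq]
      have h2 : r ^ 2 = ⟪u, ∑ i ∈ t, lam i • (V.orthogonalProjectionOnto (p i) :
          EuclideanSpace ℝ (Fin n))⟫ := by rw [← hPy, h1]
      rw [inner_sum] at h2
      simp_rw [real_inner_smul_right] at h2
      exact h2.symm
    have hterm : ∀ i ∈ t, ⟪u, (V.orthogonalProjectionOnto (p i) :
        EuclideanSpace ℝ (Fin n))⟫ ≤ r ^ 2 := by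
      intro i hi
      calc ⟪u, (V.orthogonalProjectionOnto (p i) : EuclideanSpace ℝ (Fin n))⟫
          ≤ ‖u‖ * ‖(V.orthogonalProjectionOnto (p i) : EuclideanSpace ℝ (Fin n))‖ :=
            real_inner_le_norm _ _
        _ = r ^ 2 := by rw [hueq, hvnorm i hi, sq]
    have hzero : ∑ i ∈ t, lam i * (r ^ 2 - ⟪u, (V.orthogonalProjectionOnto (p i) :
        EuclideanSpace ℝ (Fin n))⟫) = 0 := by
      simp only [mul_sub]
      rw [Finset.sum_sub_distrib, hsum2, ← Finset.sum_mul, hlam1, one_mul, sub_self]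
    have heach := (Finset.sum_eq_zero_iff_of_nonneg (fun i hi =>
      mul_nonneg (hlam0 i hi) (sub_nonneg.2 (hterm i hi)))).1 hzero
    intro i hi hne
    have h2 : ⟪u, (V.orthogonalProjectionOnto (p i) : EuclideanSpace ℝ (Fin n))⟫ = r ^ 2 := by
      have := heach i hi
      rcases mul_eq_zero.1 this with h | h
      · exact absurd h hne
      · linarith
    have h3 : ‖u - (V.orthogonalProjectionOnto (p i) : EuclideanSpace ℝ (Fin n))‖ ^ 2 = 0 := by
      rw [norm_sub_sq_real, hueq, hvnorm i hi, h2]; ring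
    have h4 : ‖u - (V.orthogonalProjectionOnto (p i) : EuclideanSpace ℝ (Fin n))‖ = 0 :=
      (pow_eq_zero_iff two_ne_zero).1 h3
    exact (sub_eq_zero.1 (norm_eq_zero.1 h4)).symm
  -- pick an index with positive weight
  obtain ⟨i0, hi0t, hi0⟩ : ∃ i ∈ t, lam i ≠ 0 := by
    by_contra h
    push_neg at h
    rw [Finset.sum_eq_zero h] at hlam1
    exact one_ne_zero hlam1.symm
  set g0 : Equiv.Perm (Fin n) := g i0 with hg0def
  have hg0 : g0 ∈ Γ := hgΓ i0 hi0t
  have hinvact : ∀ x : EuclideanSpace ℝ (Fin n), permAct g0⁻¹ (permAct g0 x) = x := by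
    intro x; rw [← permAct_mul, inv_mul_cancel, permAct_one]
  have hσmem : ∀ i ∈ t, lam i ≠ 0 → g0⁻¹ * g i ∈ stabSub Γ Pz := by
    intro i hi hne
    refine ⟨Γ.mul_mem (Γ.inv_mem hg0) (hgΓ i hi), ?_⟩
    rw [permAct_mul]
    have h5 : permAct (g i) Pz = permAct g0 Pz := by
      rw [← hpv i hi, hkey i hi hne, ← hkey i0 hi0t hi0, hpv i0 hi0t]
    rw [h5, hinvact]
  have hσw : ∀ i ∈ t, lam i ≠ 0 → permAct (g0⁻¹ * g i) (intVec w) = intVec w := by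
    intro i hi hne
    exact (hstab (hσmem i hi hne)).2
  set t' : Finset ι := t.filter (fun i => lam i ≠ 0) with ht'def
  have hsub : ∀ i ∈ t', i ∈ t := fun i hi => (Finset.mem_filter.1 hi).1
  have hne' : ∀ i ∈ t', lam i ≠ 0 := fun i hi => (Finset.mem_filter.1 hi).2
  have hlam1' : ∑ i ∈ t', lam i = 1 := by
    rw [ht'def, Finset.sum_filter_ne_zero, hlam1]
  -- the key identity
  have hyy : permAct g0⁻¹ (intVec y) =
      (∑ i ∈ t', lam i • permAct (g0⁻¹ * g i) (intVec z)) + (m : ℝ) • intVec w := by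
    rw [hsum, permAct_sum]
    have hfil : ∑ i ∈ t, permAct g0⁻¹ (lam i • p i) =
        ∑ i ∈ t', permAct g0⁻¹ (lam i • p i) := by
      rw [ht'def]
      refine (Finset.sum_filter_of_ne ?_).symm
      intro i hi hne hlz
      exact hne (by rw [hlz, zero_smul, permAct_zero])
    rw [hfil]
    have hterm : ∀ i ∈ t', permAct g0⁻¹ (lam i • p i) =
        lam i • permAct (g0⁻¹ * g i) (intVec z) + lam i • ((m : ℝ) • intVec w) := by
      intro i hi
      rw [permAct_smul, hgeq i (hsub i hi), ← permAct_mul, hZ', permAct_add, permAct_smul,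
        hσw i (hsub i hi) (hne' i hi), smul_add]
    rw [Finset.sum_congr rfl hterm, Finset.sum_add_distrib, ← Finset.sum_smul, hlam1', one_smul]
  -- the translated integer point
  set u' : Fin n → ℤ := fun i => y (g0 i) - m * w i with hu'def
  have hu' : intVec u' = permAct g0⁻¹ (intVec y) - (m : ℝ) • intVec w := by
    ext i
    simp only [hu'def, intVec, permAct, PiLp.toLp_apply, inv_inv, PiLp.sub_apply, PiLp.smul_apply, smul_eq_mul]
    push_cast; ring
  have hu'' : intVec u' = ∑ i ∈ t', lam i • permAct (g0⁻¹ * g i) (intVec z) := by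
    rw [hu', hyy, add_sub_cancel_right]
  have hmem' : intVec u' ∈ convexHull ℝ (orbitSet (stabSub Γ Pz) (intVec z)) := by
    rw [hu'', ← Finset.centerMass_eq_of_sum_1 _ _ hlam1']
    refine Finset.centerMass_mem_convexHull t' (fun i hi => hlam0 i (hsub i hi))
      (by rw [hlam1']; norm_num) ?_
    intro i hi
    exact ⟨g0⁻¹ * g i, hσmem i (hsub i hi) (hne' i hi), rfl⟩
  obtain ⟨σ, hσS, hσe⟩ := hcore u' hmem'
  refine ⟨g0 * σ, Γ.mul_mem hg0 hσS.1, ?_⟩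
  have hσw' : permAct σ (intVec w) = intVec w := (hstab hσS).2
  have hstep : permAct (g0 * σ) Z' = permAct g0 (intVec u' + (m : ℝ) • intVec w) := by
    rw [permAct_mul, hZ', permAct_add, permAct_smul, hσw', ← hσe]
  rw [hstep, hu', sub_add_cancel, permAct_inv_cancel]
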